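/- For an n×n matrix M over a field K of characteristic zero, the quotient K[y_1,...,y_n]/I_M is finite-dimensional over K if and only if every principal minor of M is nonzero, where I_M is generated by the quadrics y_i (Σ_j M_{ij} y_j). -/

import Mathlib

open MvPolynomial


lemma aux_solve {K R : Type*} [Field K] [CommRing R] [Algebra K R] {ι : Type*} [Fintype ι]
    [DecidableEq ι] (A : Matrix ι ι K) (hA : A.det ≠ 0) (I : Ideal R) (f : ι → R)
    (h : ∀ j, (∑ k, algebraMap K R (A j k) * f k) ∈ I) : ∀ k, f k ∈ I := by
  intro k
  have h1 : A⁻¹ * A = 1 := Matrix.nonsing_inv_mul A hA.isUnit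
  have key : f k = ∑ j, algebraMap K R (A⁻¹ k j) * ∑ l, algebraMap K R (A j l) * f l := by
    have : ∀ j, algebraMap K R (A⁻¹ k j) * ∑ l, algebraMap K R (A j l) * f l
        = ∑ l, (algebraMap K R (A⁻¹ k j * A j l)) * f l := by
      intro j
      rw [Finset.mul_sum]
      exact Finset.sum_congr rfl fun l _ => by rw [map_mul, mul_assoc]
    simp_rw [this]
    rw [Finset.sum_comm]
    have : ∀ l, ∑ j, algebraMap K R (A⁻¹ k j * A j l) * f l
        = algebraMap K R ((A⁻¹ * A) k l) * f l := by
      intro l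
      rw [Matrix.mul_apply, map_sum, Finset.sum_mul]
    simp_rw [this, h1, Matrix.one_apply, apply_ite (algebraMap K R), map_one, map_zero,
      ite_mul, one_mul, zero_mul, Finset.sum_ite_eq, Finset.mem_univ, if_true]
  rw [key]
  exact Ideal.sum_mem _ fun j _ => Ideal.mul_mem_left _ _ (h j)


lemma high_deg_mem {K : Type*} [Field K] {n : ℕ} (M : Matrix (Fin n) (Fin n) K)
    (hdet : ∀ J : Finset (Fin n), J.Nonempty →
      (M.submatrix (Subtype.val : {x // x ∈ J} → Fin n) Subtype.val).det ≠ 0) :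
    ∀ (c : ℕ) (u : Fin n →₀ ℕ), n ≤ u.support.card + c →
      n + 1 ≤ ∑ l, u l →
      (monomial u 1 : MvPolynomial (Fin n) K) ∈
        Ideal.span (Set.range fun i : Fin n => X i * ∑ j, C (M i j) * X j) := by
  intro c
  induction c using Nat.strong_induction_on with
  | _ c IH =>
  intro u hc hdeg
  set I := Ideal.span (Set.range fun i : Fin n => X i * ∑ j, C (M i j) * X j) with hI
  set J := u.support with hJ
  -- J is nonempty
  have hJne : J.Nonempty := by
    rcases Finset.eq_empty_or_nonempty J with h | h
    · exfalso
      have : u = 0 := Finsupp.support_eq_empty.mp h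
      rw [this] at hdeg
      simp at hdeg
    · exact h
  -- find i with u i ≥ 2
  have hcard : J.card ≤ n := by
    simpa using Finset.card_le_univ J
  obtain ⟨i, hiJ, hi2⟩ : ∃ i ∈ J, 2 ≤ u i := by
    by_contra hcon
    push_neg at hcon
    have : ∑ l, u l ≤ J.card := by
      rw [← Finset.sum_subset (Finset.subset_univ J) (fun x _ hx => Finsupp.notMem_support_iff.mp hx)]
      calc ∑ l ∈ J, u l ≤ ∑ _l ∈ J, 1 := Finset.sum_le_sum fun l hl => by
            have := hcon l hl; omega
        _ = J.card := by simp
    omega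
  -- subtract e_i
  have hle : Finsupp.single i 1 ≤ u := by
    rw [Finsupp.single_le_iff]; omega
  set u' := u - Finsupp.single i 1 with hu'def
  have hu' : u' + Finsupp.single i 1 = u := tsub_add_cancel_of_le hle
  have hu'i : 1 ≤ u' i := by
    have : u' i = u i - 1 := by simp [hu'def, Finsupp.tsub_apply]
    omega
  have hu'j : ∀ j, j ≠ i → u' j = u j := fun j hne => by
    simp [hu'def, Finsupp.tsub_apply, Finsupp.single_apply, Ne.symm hne]
  have hsum : (∑ l, u' l) + 1 = ∑ l, u l := by
    conv_rhs => rw [← hu']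
    simp [Finsupp.add_apply, Finset.sum_add_distrib, Finsupp.single_apply]
  have hXdef : ∀ j : Fin n, (X j : MvPolynomial (Fin n) K) = monomial (Finsupp.single j 1) 1 :=
    fun _ => rfl
  -- the key monomial identity
  have hkey : ∀ j ∈ J, (monomial (u' - Finsupp.single j 1) 1 : MvPolynomial (Fin n) K) *
      (X j * ∑ k, C (M j k) * X k) = ∑ k, C (M j k) * monomial (u' + Finsupp.single k 1) 1 := by
    intro j hj
    have hle2 : Finsupp.single j 1 ≤ u' := by
      rw [Finsupp.single_le_iff]
      by_cases h : j = i
      · subst h; exact hu'i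
      · rw [hu'j j h]
        have := Finsupp.mem_support_iff.mp hj
        omega
    have hw : (u' - Finsupp.single j 1) + Finsupp.single j 1 = u' := tsub_add_cancel_of_le hle2
    rw [← mul_assoc, hXdef j, monomial_mul, hw, mul_one, Finset.mul_sum]
    refine Finset.sum_congr rfl fun k _ => ?_
    rw [hXdef k, mul_comm (C (M j k)) _, ← mul_assoc, monomial_mul, mul_one,
      mul_comm _ (C (M j k))]
  -- apply the matrix inversion lemma
  have hA := hdet J hJne
  have hmem : ∀ j : {x // x ∈ J},
      (∑ k : {x // x ∈ J}, algebraMap K (MvPolynomial (Fin n) K)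
        ((M.submatrix (Subtype.val : {x // x ∈ J} → Fin n) Subtype.val) j k) *
        monomial (u' + Finsupp.single (k : Fin n) 1) 1) ∈ I := by
    intro j
    have hcoe : ∑ k : {x // x ∈ J}, algebraMap K (MvPolynomial (Fin n) K)
        ((M.submatrix (Subtype.val : {x // x ∈ J} → Fin n) Subtype.val) j k) *
        monomial (u' + Finsupp.single (k : Fin n) 1) 1
        = ∑ k ∈ J, C (M (j : Fin n) k) * monomial (u' + Finsupp.single k 1) 1 := by
      rw [← Finset.sum_coe_sort J
        (fun k => C (M (j : Fin n) k) * monomial (u' + Finsupp.single k 1) 1)]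
      exact Finset.sum_congr rfl fun k _ => by rw [algebraMap_eq]; rfl
    rw [hcoe]
    have hsplit : ∑ k ∈ J, C (M (j : Fin n) k) * monomial (u' + Finsupp.single k 1) 1
        = (∑ k, C (M (j : Fin n) k) * monomial (u' + Finsupp.single k 1) 1)
          - ∑ k ∈ Jᶜ, C (M (j : Fin n) k) * monomial (u' + Finsupp.single k 1) 1 := by
      rw [← Finset.sum_add_sum_compl J
        (fun k => C (M (j : Fin n) k) * monomial (u' + Finsupp.single k 1) 1)]
      ring
    rw [hsplit]
    refine sub_mem ?_ ?_
    · rw [← hkey j j.2]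
      exact Ideal.mul_mem_left _ _ (Ideal.subset_span ⟨(j : Fin n), rfl⟩)
    · refine Ideal.sum_mem _ fun k hk => Ideal.mul_mem_left _ _ ?_
      have hkJ : k ∉ J := Finset.mem_compl.mp hk
      set u'' : Fin n →₀ ℕ := u' + Finsupp.single k 1 with hu''def
      -- use the induction hypothesis with c - 1
      have hsub : insert k J ⊆ u''.support := by
        rw [hu''def]
        intro l hl
        rw [Finsupp.mem_support_iff, Finsupp.add_apply, Finsupp.single_apply]
        rcases Finset.mem_insert.mp hl with h | h
        · subst h; simp
        · have hlk : l ≠ k := fun e => hkJ (e ▸ h)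
          have hli : l ≠ i ∨ l = i := by tauto
          have : 1 ≤ u' l := by
            by_cases hli : l = i
            · subst hli; exact hu'i
            · rw [hu'j l hli]
              have := Finsupp.mem_support_iff.mp h
              omega
          simp [Ne.symm hlk]
          omega
      have hcard2 : J.card + 1 ≤ u''.support.card := by
        have := Finset.card_le_card hsub
        rwa [Finset.card_insert_of_notMem hkJ] at this
      have hcardlt : J.card + 1 ≤ n := by
        have := Finset.card_le_univ (insert k J)
        simpa [Finset.card_insert_of_notMem hkJ] using this
      have hc1 : 1 ≤ c := by omega
      refine IH (c - 1) (by omega) u'' (by omega) ?_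
      have : ∑ l : Fin n, u'' l = (∑ l, u' l) + 1 := by
        rw [hu''def]
        simp [Finsupp.add_apply, Finset.sum_add_distrib, Finsupp.single_apply]
      omega
  have := aux_solve _ hA I _ hmem ⟨i, hiJ⟩
  simpa [hu'] using this


lemma not_finite_of_det_eq_zero {K : Type*} [Field K] {n : ℕ} (M : Matrix (Fin n) (Fin n) K)
    (J : Finset (Fin n))
    (hdet : (M.submatrix (Subtype.val : {x // x ∈ J} → Fin n) Subtype.val).det = 0)
    (hfin : Module.Finite K
        (MvPolynomial (Fin n) K ⧸
          (Ideal.span (Set.range fun i : Fin n => X i * ∑ j, C (M i j) * X j) :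
            Ideal (MvPolynomial (Fin n) K)))) : False := by
  set I := Ideal.span (Set.range fun i : Fin n => X i * ∑ j, C (M i j) * X j) with hI
  obtain ⟨v, hv0, hvM⟩ := (Matrix.exists_mulVec_eq_zero_iff).mpr hdet
  set y : Fin n → K := fun i => if h : i ∈ J then v ⟨i, h⟩ else 0 with hy
  have hker : ∀ i, y i * ∑ j, M i j * y j = 0 := by
    intro i
    by_cases hi : i ∈ J
    · have : ∑ j, M i j * y j = 0 := by
        have : ∑ j, M i j * y j = ∑ j ∈ J, M i j * y j := by
          rw [← Finset.sum_subset (Finset.subset_univ J)]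
          intro x _ hx
          simp [hy, hx]
        rw [this, ← Finset.sum_coe_sort J (fun j => M i j * y j)]
        have := congrFun hvM ⟨i, hi⟩
        simpa [Matrix.mulVec, dotProduct, hy] using this
      rw [this, mul_zero]
    · simp [hy, hi]
  set φ : MvPolynomial (Fin n) K →ₐ[K] Polynomial K :=
    aeval (fun i => Polynomial.C (y i) * Polynomial.X) with hφ
  have hgenset : ∀ q ∈ Set.range (fun i : Fin n => X i * ∑ j, C (M i j) * X j),
      q ∈ RingHom.ker (φ : MvPolynomial (Fin n) K →+* Polynomial K) := by
    rintro q ⟨i, rfl⟩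
    rw [RingHom.mem_ker]
    have : φ (X i * ∑ j, C (M i j) * X j)
        = Polynomial.C (y i * ∑ j, M i j * y j) * Polynomial.X ^ 2 := by
      rw [map_mul, map_sum, aeval_X]
      have : ∀ j, φ (C (M i j) * X j) = Polynomial.C (M i j * y j) * Polynomial.X := by
        intro j
        rw [map_mul, aeval_C, aeval_X, Polynomial.algebraMap_eq, Polynomial.C_mul, mul_assoc]
      simp_rw [this]
      rw [← Finset.sum_mul, ← map_sum, Polynomial.C_mul]
      ring
    have h2 : (φ (X i * ∑ j, C (M i j) * X j) : Polynomial K) = φ (X i * ∑ j, C (M i j) * X j) := rfl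
    rw [show ((φ : MvPolynomial (Fin n) K →+* Polynomial K) (X i * ∑ j, C (M i j) * X j))
        = φ (X i * ∑ j, C (M i j) * X j) from rfl, this, hker i, map_zero, zero_mul]
  have hgen : ∀ p ∈ I, φ p = 0 := by
    intro p hp
    have hle : I ≤ RingHom.ker (φ : MvPolynomial (Fin n) K →+* Polynomial K) := by
      rw [hI]; exact Ideal.span_le.mpr hgenset
    exact RingHom.mem_ker.mp (hle hp)
  set ψ : (MvPolynomial (Fin n) K ⧸ I) →ₐ[K] Polynomial K :=
    Ideal.Quotient.liftₐ I φ hgen with hψ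
  obtain ⟨i0, hi0⟩ : ∃ i0, y i0 ≠ 0 := by
    obtain ⟨k, hk⟩ := Function.ne_iff.mp hv0
    exact ⟨(k : Fin n), by simpa [hy, k.2] using hk⟩
  have hXin : Polynomial.X ∈ φ.range := by
    refine (AlgHom.mem_range _).mpr ⟨C (y i0)⁻¹ * X i0, ?_⟩
    rw [map_mul, aeval_C, aeval_X, Polynomial.algebraMap_eq, ← mul_assoc, ← Polynomial.C_mul,
      inv_mul_cancel₀ hi0, Polynomial.C_1, one_mul]
  have hφsurj : Function.Surjective φ := by
    have htop : (⊤ : Subalgebra K (Polynomial K)) ≤ φ.range := by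
      rw [← Polynomial.adjoin_X]
      exact Algebra.adjoin_le (Set.singleton_subset_iff.mpr hXin)
    intro q
    exact (AlgHom.mem_range _).mp (htop (Algebra.mem_top))
  have hsurj : Function.Surjective ψ := by
    intro q
    obtain ⟨p, hp⟩ := hφsurj q
    refine ⟨Ideal.Quotient.mk I p, ?_⟩
    rw [hψ, Ideal.Quotient.liftₐ_apply, ← hp]
    rfl
  have : Module.Finite K (Polynomial K) :=
    Module.Finite.of_surjective ψ.toLinearMap hsurj
  exact Polynomial.not_finite this


/-- `K[y]/I_M` is finite-dimensional over `K` if and only if every principal minor of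
`M` is nonzero, where `I_M = (y_i ∑_j M_{ij} y_j : i ∈ [n])`. -/
theorem quotient_finite_dimensional_iff_principal_minors_ne_zero
    {K : Type*} [Field K] [CharZero K] {n : ℕ}
    (M : Matrix (Fin n) (Fin n) K) :
    Module.Finite K
        (MvPolynomial (Fin n) K ⧸
          (Ideal.span (Set.range fun i : Fin n => X i * ∑ j, C (M i j) * X j) :
            Ideal (MvPolynomial (Fin n) K))) ↔
    ∀ J : Finset (Fin n), J.Nonempty →
      (M.submatrix (Subtype.val : {x // x ∈ J} → Fin n) Subtype.val).det ≠ 0 := by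
  constructor
  · intro hfin J hJne hdet
    exact not_finite_of_det_eq_zero M J hdet hfin
  · intro hdet
    set I := Ideal.span (Set.range fun i : Fin n => X i * ∑ j, C (M i j) * X j) with hI
    have hmono : ∀ u : Fin n →₀ ℕ, n + 1 ≤ ∑ l, u l →
        (monomial u 1 : MvPolynomial (Fin n) K) ∈ I :=
      fun u h => high_deg_mem M hdet n u (Nat.le_add_left n _) h
    let f : restrictTotalDegree (Fin n) K n →ₗ[K] (MvPolynomial (Fin n) K ⧸ I) :=
      (Ideal.Quotient.mkₐ K I).toLinearMap ∘ₗ (restrictTotalDegree (Fin n) K n).subtype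
    have hsurj : Function.Surjective f := by
      intro q
      obtain ⟨p, rfl⟩ := Ideal.Quotient.mkₐ_surjective K I q
      have hp : p ∈ (Submodule.restrictScalars K I) ⊔ restrictTotalDegree (Fin n) K n := by
        rw [MvPolynomial.as_sum p]
        refine Submodule.sum_mem _ fun v hv => ?_
        by_cases hdegv : (v.sum fun _ e => e) ≤ n
        · refine Submodule.mem_sup_right ?_
          rw [mem_restrictTotalDegree]
          rw [totalDegree_monomial v (mem_support_iff.mp hv)]
          exact hdegv
        · refine Submodule.mem_sup_left ?_
          show monomial v (coeff v p) ∈ I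
          have heq : (C (coeff v p) : MvPolynomial (Fin n) K) * monomial v 1
              = monomial v (coeff v p) := by
            rw [C_mul_monomial, mul_one]
          have hds : (v.sum fun _ e => e) = ∑ l, v l :=
            Finsupp.sum_fintype v (fun _ e => e) (fun _ => rfl)
          exact heq ▸ Ideal.mul_mem_left _ _ (hmono v (by omega))
      rcases Submodule.mem_sup.mp hp with ⟨a, ha, b, hb, rfl⟩
      refine ⟨⟨b, hb⟩, ?_⟩
      show Ideal.Quotient.mkₐ K I b = Ideal.Quotient.mkₐ K I (a + b)
      rw [map_add]
      have h0 : Ideal.Quotient.mkₐ K I a = 0 := by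
        rw [Ideal.Quotient.mkₐ_eq_mk]
        exact Ideal.Quotient.eq_zero_iff_mem.mpr ha
      rw [h0, zero_add]
    exact Module.Finite.of_surjective f hsurj
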